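/- arXiv:2409.01852 — 6 statements merged into one kernel-verified Lean document; each statement's English description precedes it below -/
import Mathlib

section
/- For the Dabrowski indicatrix χ(π) = (3π − 1)/6, the function ζ(π) = (1+π)(χ(π) − π)χ′(π) + 2χ(π)(1 − χ(π)) equals −17/36 + π − (3/4)π², and ζ(π) < 0 for all π ∈ (0,1). -/
/-- For the Dabrowski indicatrix χ(π) = (3π−1)/6, the quantity
ζ(π) = (1+π)(χ−π)χ′ + 2χ(1−χ) equals −17/36 + π − (3/4)π² and is negative on (0,1). -/
theorem dabrowski_zeta (χ : ℝ → ℝ) (hχ : ∀ π : ℝ, χ π = (3 * π - 1) / 6) :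
    (∀ π : ℝ, (1 + π) * (χ π - π) * deriv χ π + 2 * χ π * (1 - χ π)
        = -17/36 + π - (3/4) * π^2) ∧
    (∀ π : ℝ, 0 < π → π < 1 →
        (1 + π) * (χ π - π) * deriv χ π + 2 * χ π * (1 - χ π) < 0) := by
  have hfun : χ = fun x => (3 * x - 1) / 6 := funext hχ
  subst hfun
  have hderiv : ∀ x : ℝ, deriv (fun x : ℝ => (3 * x - 1) / 6) x = 1 / 2 := by
    intro x
    have h : HasDerivAt (fun x : ℝ => (3 * x - 1) / 6) (1 / 2) x := by
      have := (((hasDerivAt_id x).const_mul (3 : ℝ)).sub_const 1).div_const 6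
      norm_num at this; convert this using 1
    exact h.deriv
  have key : ∀ x : ℝ, (1 + x) * ((3 * x - 1) / 6 - x) * deriv (fun x : ℝ => (3 * x - 1) / 6) x
      + 2 * ((3 * x - 1) / 6) * (1 - (3 * x - 1) / 6) = -17/36 + x - (3/4) * x^2 := by
    intro x; rw [hderiv]; ring
  refine ⟨key, fun x h0 h1 => ?_⟩
  rw [key]
  nlinarith [sq_nonneg (x - 2/3)]
end

section
/- For the Dabrowski indicatrix χ(π) = (3π − 1)/6, the function ξ(π) = (2π+1)χ(π) − π equals −1/6 − (5/6)π + π², and ξ(π) < 0 for all π ∈ (0,1). Hence the Dabrowski solution violates the compressibility condition H₂ᴳ throughout the energy-condition domain. -/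
/-- For the Dabrowski indicatrix χ(π) = (3π−1)/6, ξ(π) = (2π+1)χ(π) − π equals
−1/6 − (5/6)π + π² and is negative on (0,1): the compressibility condition H₂ᴳ fails. -/
theorem dabrowski_xi (χ : ℝ → ℝ) (hχ : ∀ π : ℝ, χ π = (3 * π - 1) / 6) :
    (∀ π : ℝ, (2 * π + 1) * χ π - π = -1/6 - (5/6) * π + π^2) ∧
    (∀ π : ℝ, 0 < π → π < 1 → (2 * π + 1) * χ π - π < 0) := by
  constructor
  · intro π; rw [hχ]; ring
  · intro π h0 h1; rw [hχ]; nlinarith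
end

section
/- Let χ(π) = γπ + γ − 2/3 and ζ(π) = (1+π)(χ(π) − π)χ′(π) + 2χ(π)(1−χ(π)). Then ζ(π) = −γ(γ+1)π² + γ(3 − 2γ)π − γ(γ − 4) − 20/9, and if 2/3 < γ < 5/6 then ζ(π) > 0 for all π ∈ (0,1). -/
/-- For χ(π) = γπ + γ − 2/3, ζ(π) = (1+π)(χ−π)χ′ + 2χ(1−χ) equals
−γ(γ+1)π² + γ(3 − 2γ)π − γ(γ − 4) − 20/9, and is positive on (0,1) when 2/3 < γ < 5/6. -/
theorem ideal_radiation_zeta (γ : ℝ) (χ : ℝ → ℝ)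
    (hχ : ∀ π : ℝ, χ π = γ * π + γ - 2/3) :
    (∀ π : ℝ, (1 + π) * (χ π - π) * deriv χ π + 2 * χ π * (1 - χ π)
        = -γ * (γ + 1) * π^2 + γ * (3 - 2*γ) * π - γ * (γ - 4) - 20/9) ∧
    (2/3 < γ → γ < 5/6 → ∀ π : ℝ, 0 < π → π < 1 →
        0 < (1 + π) * (χ π - π) * deriv χ π + 2 * χ π * (1 - χ π)) := by
  have hfun : χ = fun π => γ * π + γ - 2/3 := funext hχ
  have hderiv : ∀ π : ℝ, deriv χ π = γ := by
    intro π
    rw [hfun]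
    have h : HasDerivAt (fun π : ℝ => γ * π + γ - 2/3) γ π := by
      have : HasDerivAt (fun x : ℝ => γ * id x + (γ - 2/3)) (γ * 1) π :=
        ((hasDerivAt_id π).const_mul γ).add_const (γ - 2/3)
      convert this using 2
      · simp [id]; ring
      · ring
    exact h.deriv
  have key : ∀ π : ℝ, (1 + π) * (χ π - π) * deriv χ π + 2 * χ π * (1 - χ π)
      = -γ * (γ + 1) * π^2 + γ * (3 - 2*γ) * π - γ * (γ - 4) - 20/9 := by
    intro π
    rw [hχ π, hderiv π]; ring
  refine ⟨key, fun h1 h2 π h3 h4 => ?_⟩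
  rw [key π]
  have a1 : (0:ℝ) < γ - 2/3 := by linarith
  have a2 : (0:ℝ) < 5/6 - γ := by linarith
  have a3 : (0:ℝ) < 10/3 - γ := by linarith
  nlinarith [mul_pos a1 a2, mul_pos a1 a3, mul_pos h3 (sub_pos.mpr h4),
    mul_pos (mul_pos a1 a2) h3, mul_pos (mul_pos a1 a3) (sub_pos.mpr h4),
    mul_pos (mul_pos a1 a2) (mul_pos h3 (sub_pos.mpr h4)),
    mul_pos (mul_pos a1 a3) (mul_pos h3 (sub_pos.mpr h4))]
end

section
/- Let χ(π) = γπ + γ − 2/3 and ξ(π) = (2π+1)χ(π) − π = 2γπ² + (3γ − 7/3)π + γ − 2/3. If γ > (13 − 2√30)/3 then ξ(π) > 0 for all π ∈ (0,1). -/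
/-- For χ(π) = γπ + γ − 2/3, ξ(π) = (2π+1)χ(π) − π = 2γπ² + (3γ − 7/3)π + γ − 2/3,
and if γ > (13 − 2√30)/3 then ξ > 0 on (0,1). -/
theorem ideal_radiation_xi (γ : ℝ) (χ : ℝ → ℝ)
    (hχ : ∀ π : ℝ, χ π = γ * π + γ - 2/3) :
    (∀ π : ℝ, (2 * π + 1) * χ π - π = 2*γ*π^2 + (3*γ - 7/3) * π + γ - 2/3) ∧
    ((13 - 2 * Real.sqrt 30) / 3 < γ → ∀ π : ℝ, 0 < π → π < 1 →
        0 < (2 * π + 1) * χ π - π) := by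
  constructor
  · intro π; rw [hχ]; ring
  · intro hγ π h0 h1
    rw [hχ]
    have hs : Real.sqrt 30 ^ 2 = 30 := Real.sq_sqrt (by norm_num)
    have hs' : Real.sqrt 30 < 6 := by nlinarith [Real.sqrt_nonneg 30]
    have h26 : (0:ℝ) ≤ 26 - 4 * Real.sqrt 30 := by nlinarith
    have key : (13 - 2*Real.sqrt 30) * ((2*π+1)*(π+1)) ≥ (7*π+2) := by
      nlinarith [mul_nonneg h26 (sq_nonneg (14*π + 4 - Real.sqrt 30)), hs]
    have hpos : 0 < (2*π+1)*(π+1) := by nlinarith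
    nlinarith [mul_lt_mul_of_pos_right hγ hpos]
end

section
/- Let γ_ξ = (13 − 2√30)/3. For every γ with γ_ξ < γ < 5/6, the indicatrix function χ(π) = γπ + γ − 2/3 satisfies all of the conditions: 0 < χ(π) < 1, ζ(π) > 0, and ξ(π) > 0, for all π ∈ (0,1). -/
/-- For γ_ξ = (13 − 2√30)/3 < γ < 5/6 and χ(π) = γπ + γ − 2/3, all the compressibility
conditions 0 < χ < 1, ζ > 0, ξ > 0 hold for every π ∈ (0,1). -/
theorem ideal_radiation_all_compressibility (γ : ℝ) (χ : ℝ → ℝ)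
    (hχ : ∀ π : ℝ, χ π = γ * π + γ - 2/3)
    (hγ1 : (13 - 2 * Real.sqrt 30) / 3 < γ) (hγ2 : γ < 5/6) :
    ∀ π : ℝ, 0 < π → π < 1 →
      (0 < χ π ∧ χ π < 1) ∧
      0 < (1 + π) * (χ π - π) * deriv χ π + 2 * χ π * (1 - χ π) ∧
      0 < (2 * π + 1) * χ π - π := by
  have hfun : χ = fun π => γ * π + γ - 2/3 := funext hχ
  subst hfun
  have hs : Real.sqrt 30 ^ 2 = 30 := Real.sq_sqrt (by norm_num)
  have hs5 : (5:ℝ) < Real.sqrt 30 := by nlinarith [Real.sqrt_nonneg 30]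
  have hs6 : Real.sqrt 30 < 5.5 := by nlinarith [Real.sqrt_nonneg 30]
  intro π h0 h1
  have hd : deriv (fun x : ℝ => γ * x + γ - 2/3) π = γ := by
    have h : HasDerivAt (fun x : ℝ => γ * x + γ - 2/3) γ π := by
      simpa using (((hasDerivAt_id π).const_mul γ).add_const γ).sub_const (2/3)
    exact h.deriv
  set s := Real.sqrt 30
  simp only [hd]
  refine ⟨⟨by nlinarith, by nlinarith⟩, ?_, ?_⟩
  · have ha : 2/3 < γ := by nlinarith
    have h1' : 0 < 1 - π := by linarith
    have hc : 0 < γ - 2/3 := by linarith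
    nlinarith [mul_pos h1' (mul_pos hc (show (0:ℝ) < 10/3 - γ by linarith)),
      mul_pos h0 (mul_pos hc (show (0:ℝ) < 5/6 - γ by linarith)),
      mul_pos (mul_pos h0 h1') (show (0:ℝ) < γ by linarith),
      mul_nonneg (mul_nonneg h0.le h1'.le) (sq_nonneg γ)]
  · nlinarith [sq_nonneg (s - 5), sq_nonneg (4*γ*π + 3*γ - 7/3), sq_nonneg π, mul_pos h0 h0, sq_nonneg (3*γ + s - 13/2)]
end

section
/- Let χ(ρ,p) = π + 1/3 + (1/3)(π+1)[(π+1)c₁ + c₂] with constants c₁, c₂ and π = p/ρ. If χ, viewed as a function of (ρ,p), satisfies χ(ρ,0) = 0, ∂_p χ(ρ,0) = γ/ρ and ∂_ρ χ(ρ,0) = 0 for all ρ > 0 (first-order matching with a classical ideal gas of adiabatic index γ), then χ(π) = γπ + (γ − 2/3)π². -/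
/-- If the ideal gas Stephani indicatrix χ(ρ,p) = π + 1/3 + (1/3)(π+1)[(π+1)c₁ + c₂]
(π = p/ρ) matches a classical ideal gas of adiabatic index γ up to first order at p = 0,
then χ(π) = γπ + (γ − 2/3)π². -/
theorem stephani_first_order_low (c₁ c₂ γ : ℝ) (χ : ℝ → ℝ → ℝ)
    (hχ : ∀ ρ p : ℝ, χ ρ p = p/ρ + 1/3 + (1/3) * (p/ρ + 1) * ((p/ρ + 1) * c₁ + c₂))
    (h0 : ∀ ρ : ℝ, 0 < ρ → χ ρ 0 = 0)
    (hp : ∀ ρ : ℝ, 0 < ρ → deriv (fun p => χ ρ p) 0 = γ / ρ)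
    (hρ : ∀ ρ : ℝ, 0 < ρ → deriv (fun r => χ r 0) ρ = 0) :
    ∀ ρ p : ℝ, 0 < ρ → χ ρ p = γ * (p/ρ) + (γ - 2/3) * (p/ρ)^2 := by
  -- First matching condition at ρ = 1 : c₁ + c₂ = -1
  have e0 : c₁ + c₂ = -1 := by
    have h := h0 1 one_pos
    rw [hχ 1 0] at h
    norm_num at h
    linarith
  -- Second matching condition at ρ = 1 : 1 + (2c₁ + c₂)/3 = γ
  have e1 : 1 + (2 * c₁ + c₂) / 3 = γ := by
    have h := hp 1 one_pos
    have hfun : (fun p => χ 1 p)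
        = fun p : ℝ => p + 1/3 + (1/3) * (p + 1) * ((p + 1) * c₁ + c₂) := by
      funext p
      rw [hχ 1 p]
      norm_num
    rw [hfun] at h
    have hd : HasDerivAt
        (fun p : ℝ => p + 1/3 + (1/3) * (p + 1) * ((p + 1) * c₁ + c₂))
        (1 + (2 * c₁ + c₂) / 3) 0 := by
      have h1 : HasDerivAt (fun p : ℝ => p) 1 0 := hasDerivAt_id 0
      have h2 := ((h1.add_const (1:ℝ)).const_mul ((1:ℝ)/3)).mul
        (((h1.add_const (1:ℝ)).mul_const c₁).add_const c₂)
      convert (h1.add_const ((1:ℝ)/3)).add h2 using 1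
      · rfl
      · rfl
      · rfl
      · ring
    rw [hd.deriv] at h
    simpa using h
  have hc1 : c₁ = 3 * γ - 2 := by linarith
  have hc2 : c₂ = 1 - 3 * γ := by linarith
  intro ρ p hρ'
  rw [hχ ρ p, hc1, hc2]
  ring
end
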